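/- arXiv:2407.04058 — 2 statements merged into one kernel-verified Lean document; each statement's English description precedes it below -/
import Mathlib

section
/- For the three-qubit GHZ state |GHZ⟩ = (|000⟩ + |111⟩)/√2, the minimum over all choices of local orthonormal measurement bases on each qubit of the Shannon entropy of the joint outcome distribution equals ln 2. -/
noncomputable section
open scoped BigOperators

/-- Shannon entropy (natural logarithm), with the convention `0 * log 0 = 0`. -/
def shannon {α : Type*} [Fintype α] (p : α → ℝ) : ℝ := -∑ y, p y * Real.log (p y)

/-- `B` lists the members of an orthonormal basis of `ℂ^d` (the rows `B a` are the basis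
vectors). -/
def ONB {d : ℕ} (B : Fin d → Fin d → ℂ) : Prop :=
  ∀ a b, (∑ i, (starRingEnd ℂ) (B a i) * B b i) = if a = b then 1 else 0

/-- Born-rule joint outcome distribution obtained by measuring each qubit of the three-qubit
pure state with amplitudes `ψ` (in the computational basis) in the local orthonormal bases
`B₁, B₂, B₃`. -/
def bornProb3 (ψ : Fin 2 → Fin 2 → Fin 2 → ℂ) (B₁ B₂ B₃ : Fin 2 → Fin 2 → ℂ)
    (y : Fin 2 × Fin 2 × Fin 2) : ℝ :=
  Complex.normSq (∑ i, ∑ j, ∑ k,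
    (starRingEnd ℂ) (B₁ y.1 i) * (starRingEnd ℂ) (B₂ y.2.1 j) *
      (starRingEnd ℂ) (B₃ y.2.2 k) * ψ i j k)

/-- Amplitudes of the three-qubit GHZ state `(|000⟩ + |111⟩)/√2`. -/
def ghz (i j k : Fin 2) : ℂ :=
  if i = j ∧ j = k then (Complex.ofReal (Real.sqrt 2))⁻¹ else 0

-- columns lemma
lemma ONB.col {B : Fin 2 → Fin 2 → ℂ} (h : ONB B) (i i' : Fin 2) :
    ∑ a, (starRingEnd ℂ) (B a i) * B a i' = if i = i' then 1 else 0 := by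
  have hM : (Matrix.of B) * (Matrix.of B).conjTranspose = 1 := by
    ext a b
    have := congrArg (starRingEnd ℂ) (h a b)
    simp only [map_sum, map_mul, RingHom.id_apply, starRingEnd_self_apply] at this
    simp only [Matrix.mul_apply, Matrix.conjTranspose_apply, Matrix.of_apply, Matrix.one_apply]
    rw [show (∑ x, B a x * star (B b x)) = ∑ x, B a x * (starRingEnd ℂ) (B b x) from rfl, this]
    by_cases hab : a = b <;> simp [hab]
  have hM' : (Matrix.of B).conjTranspose * (Matrix.of B) = 1 := mul_eq_one_comm.mp hM
  have := congrFun (congrFun hM' i) i'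
  simpa [Matrix.mul_apply, Matrix.conjTranspose_apply, Matrix.one_apply] using this

lemma ONB.row {B : Fin 2 → Fin 2 → ℂ} (h : ONB B) (a : Fin 2) :
    Complex.normSq (B a 0) + Complex.normSq (B a 1) = 1 := by
  have := h a a
  simp only [Fin.sum_univ_two, if_true, eq_self_iff_true] at this
  have h2 : ((Complex.normSq (B a 0) + Complex.normSq (B a 1) : ℝ) : ℂ) = 1 := by
    push_cast
    rw [← Complex.normSq_eq_conj_mul_self, ← Complex.normSq_eq_conj_mul_self] at this
    exact_mod_cast this
  exact_mod_cast h2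

lemma born_ghz (B₁ B₂ B₃ : Fin 2 → Fin 2 → ℂ) (y : Fin 2 × Fin 2 × Fin 2) :
    bornProb3 ghz B₁ B₂ B₃ y =
      Complex.normSq ((starRingEnd ℂ) (B₁ y.1 0) * (starRingEnd ℂ) (B₂ y.2.1 0) *
          (starRingEnd ℂ) (B₃ y.2.2 0)
        + (starRingEnd ℂ) (B₁ y.1 1) * (starRingEnd ℂ) (B₂ y.2.1 1) *
          (starRingEnd ℂ) (B₃ y.2.2 1)) / 2 := by
  have hs : Complex.normSq ((Complex.ofReal (Real.sqrt 2))⁻¹) = 1/2 := by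
    rw [Complex.normSq_inv, Complex.normSq_ofReal]
    rw [Real.mul_self_sqrt (by norm_num)]; norm_num
  unfold bornProb3 ghz
  simp only [Fin.sum_univ_two]
  norm_num
  rw [show ((starRingEnd ℂ) (B₁ y.1 0) * (starRingEnd ℂ) (B₂ y.2.1 0) *
          (starRingEnd ℂ) (B₃ y.2.2 0) * (Complex.ofReal (Real.sqrt 2))⁻¹
        + (starRingEnd ℂ) (B₁ y.1 1) * (starRingEnd ℂ) (B₂ y.2.1 1) *
          (starRingEnd ℂ) (B₃ y.2.2 1) * (Complex.ofReal (Real.sqrt 2))⁻¹)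
      = ((starRingEnd ℂ) (B₁ y.1 0) * (starRingEnd ℂ) (B₂ y.2.1 0) *
          (starRingEnd ℂ) (B₃ y.2.2 0)
        + (starRingEnd ℂ) (B₁ y.1 1) * (starRingEnd ℂ) (B₂ y.2.1 1) *
          (starRingEnd ℂ) (B₃ y.2.2 1)) * (Complex.ofReal (Real.sqrt 2))⁻¹ by ring]
  rw [Complex.normSq_mul, hs]
  ring

lemma ONB.colnsq {B : Fin 2 → Fin 2 → ℂ} (h : ONB B) (i : Fin 2) :
    ∑ a, Complex.normSq (B a i) = 1 := by
  have := h.col i i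
  simp only [if_true, eq_self_iff_true] at this
  have h2 : ((∑ a, Complex.normSq (B a i) : ℝ) : ℂ) = 1 := by
    push_cast
    simp only [Complex.normSq_eq_conj_mul_self]
    exact this
  exact_mod_cast h2

lemma triple_sumC (f g h : Fin 2 → ℂ) :
    ∑ y : Fin 2 × Fin 2 × Fin 2, f y.1 * g y.2.1 * h y.2.2
      = (∑ a, f a) * (∑ b, g b) * (∑ c, h c) := by
  simp [Fintype.sum_prod_type, Fin.sum_univ_two]; ring

lemma triple_sumR (f g h : Fin 2 → ℝ) :
    ∑ y : Fin 2 × Fin 2 × Fin 2, f y.1 * g y.2.1 * h y.2.2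
      = (∑ a, f a) * (∑ b, g b) * (∑ c, h c) := by
  simp [Fintype.sum_prod_type, Fin.sum_univ_two]; ring

lemma sum_born {B₁ B₂ B₃ : Fin 2 → Fin 2 → ℂ} (h₁ : ONB B₁) (h₂ : ONB B₂) (h₃ : ONB B₃) :
    ∑ y, bornProb3 ghz B₁ B₂ B₃ y = 1 := by
  have step : ∀ y : Fin 2 × Fin 2 × Fin 2, bornProb3 ghz B₁ B₂ B₃ y =
      (Complex.normSq (B₁ y.1 0) * Complex.normSq (B₂ y.2.1 0) * Complex.normSq (B₃ y.2.2 0)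
        + Complex.normSq (B₁ y.1 1) * Complex.normSq (B₂ y.2.1 1) * Complex.normSq (B₃ y.2.2 1)
        + 2 * (((starRingEnd ℂ) (B₁ y.1 0) * B₁ y.1 1) * ((starRingEnd ℂ) (B₂ y.2.1 0) * B₂ y.2.1 1)
              * ((starRingEnd ℂ) (B₃ y.2.2 0) * B₃ y.2.2 1)).re) / 2 := by
    intro y
    rw [born_ghz, Complex.normSq_add]
    rw [Complex.normSq_mul, Complex.normSq_mul, Complex.normSq_mul, Complex.normSq_mul,
      Complex.normSq_conj, Complex.normSq_conj, Complex.normSq_conj,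
      Complex.normSq_conj, Complex.normSq_conj, Complex.normSq_conj]
    simp only [map_mul, Complex.conj_conj]
    have hre : ((starRingEnd ℂ) (B₁ y.1 0) * (starRingEnd ℂ) (B₂ y.2.1 0) * (starRingEnd ℂ) (B₃ y.2.2 0) *
          (B₁ y.1 1 * B₂ y.2.1 1 * B₃ y.2.2 1)).re
        = (((starRingEnd ℂ) (B₁ y.1 0) * B₁ y.1 1) * ((starRingEnd ℂ) (B₂ y.2.1 0) * B₂ y.2.1 1)
              * ((starRingEnd ℂ) (B₃ y.2.2 0) * B₃ y.2.2 1)).re := by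
      congr 1
      ring
    rw [hre]
  rw [Finset.sum_congr rfl fun y _ => step y]
  have e1 : ∑ y : Fin 2 × Fin 2 × Fin 2,
      Complex.normSq (B₁ y.1 0) * Complex.normSq (B₂ y.2.1 0) * Complex.normSq (B₃ y.2.2 0) = 1 := by
    rw [triple_sumR (fun a => Complex.normSq (B₁ a 0)) (fun b => Complex.normSq (B₂ b 0)) (fun c => Complex.normSq (B₃ c 0)), h₁.colnsq, h₂.colnsq, h₃.colnsq]; norm_num
  have e2 : ∑ y : Fin 2 × Fin 2 × Fin 2,
      Complex.normSq (B₁ y.1 1) * Complex.normSq (B₂ y.2.1 1) * Complex.normSq (B₃ y.2.2 1) = 1 := by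
    rw [triple_sumR (fun a => Complex.normSq (B₁ a 1)) (fun b => Complex.normSq (B₂ b 1)) (fun c => Complex.normSq (B₃ c 1)), h₁.colnsq, h₂.colnsq, h₃.colnsq]; norm_num
  have e3 : ∑ y : Fin 2 × Fin 2 × Fin 2,
      (((starRingEnd ℂ) (B₁ y.1 0) * B₁ y.1 1) * ((starRingEnd ℂ) (B₂ y.2.1 0) * B₂ y.2.1 1)
        * ((starRingEnd ℂ) (B₃ y.2.2 0) * B₃ y.2.2 1)).re = 0 := by
    rw [← Complex.re_sum]
    rw [triple_sumC (fun a => (starRingEnd ℂ) (B₁ a 0) * B₁ a 1) (fun b => (starRingEnd ℂ) (B₂ b 0) * B₂ b 1) (fun c => (starRingEnd ℂ) (B₃ c 0) * B₃ c 1), h₁.col 0 1]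
    norm_num
  simp only [div_eq_mul_inv, ← Finset.sum_mul]
  rw [Finset.sum_add_distrib, Finset.sum_add_distrib, e1, e2, ← Finset.mul_sum, e3]
  norm_num

lemma born_le_half {B₁ B₂ B₃ : Fin 2 → Fin 2 → ℂ} (h₁ : ONB B₁) (h₂ : ONB B₂) (h₃ : ONB B₃)
    (y : Fin 2 × Fin 2 × Fin 2) : bornProb3 ghz B₁ B₂ B₃ y ≤ 1/2 := by
  rw [born_ghz]
  have key : Complex.normSq ((starRingEnd ℂ) (B₁ y.1 0) * (starRingEnd ℂ) (B₂ y.2.1 0) *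
          (starRingEnd ℂ) (B₃ y.2.2 0)
        + (starRingEnd ℂ) (B₁ y.1 1) * (starRingEnd ℂ) (B₂ y.2.1 1) *
          (starRingEnd ℂ) (B₃ y.2.2 1)) ≤ 1 := by
    set z := (starRingEnd ℂ) (B₁ y.1 0) * (starRingEnd ℂ) (B₂ y.2.1 0) *
          (starRingEnd ℂ) (B₃ y.2.2 0)
    set w := (starRingEnd ℂ) (B₁ y.1 1) * (starRingEnd ℂ) (B₂ y.2.1 1) *
          (starRingEnd ℂ) (B₃ y.2.2 1)
    have habs : ‖z + w‖ ≤ ‖z‖ + ‖w‖ := norm_add_le z w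
    have hz : ‖z‖ = ‖B₁ y.1 0‖ * ‖B₂ y.2.1 0‖ *
        ‖B₃ y.2.2 0‖ := by simp [z, map_mul, Complex.norm_conj]
    have hw : ‖w‖ = ‖B₁ y.1 1‖ * ‖B₂ y.2.1 1‖ *
        ‖B₃ y.2.2 1‖ := by simp [w, map_mul, Complex.norm_conj]
    have hn : Complex.normSq (z + w) = (‖z + w‖)^2 := by
      rw [Complex.sq_norm]
    rw [hn]
    have r1 := h₁.row y.1
    have r2 := h₂.row y.2.1
    have r3 := h₃.row y.2.2
    rw [← Complex.sq_norm, ← Complex.sq_norm] at r1 r2 r3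
    set a := ‖B₁ y.1 0‖; set b := ‖B₁ y.1 1‖
    set c := ‖B₂ y.2.1 0‖; set d := ‖B₂ y.2.1 1‖
    set e := ‖B₃ y.2.2 0‖; set f := ‖B₃ y.2.2 1‖
    have ha : 0 ≤ a := norm_nonneg _
    have hb : 0 ≤ b := norm_nonneg _
    have hc : 0 ≤ c := norm_nonneg _
    have hd : 0 ≤ d := norm_nonneg _
    have he : 0 ≤ e := norm_nonneg _
    have hf : 0 ≤ f := norm_nonneg _
    have h0 : 0 ≤ ‖z + w‖ := norm_nonneg _
    have hb2 : ‖z + w‖ ≤ a*c*e + b*d*f := by rw [hz, hw] at habs; exact habs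
    have cs : (a*c*e + b*d*f)^2 ≤ (a^2 + b^2) * ((c*e)^2 + (d*f)^2) := by nlinarith [sq_nonneg (a*d*f - b*c*e)]
    have hce : (c*e)^2 + (d*f)^2 ≤ 1 := by nlinarith [sq_nonneg c, sq_nonneg d, sq_nonneg e, sq_nonneg f]
    nlinarith [sq_nonneg (a*c*e + b*d*f)]
  linarith

lemma entropy_ge {α : Type*} [Fintype α] (p : α → ℝ) (h0 : ∀ y, 0 ≤ p y)
    (hh : ∀ y, p y ≤ 1/2) (hs : ∑ y, p y = 1) : Real.log 2 ≤ shannon p := by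
  have key : ∀ y, p y * Real.log 2 ≤ -(p y * Real.log (p y)) := by
    intro y
    rcases eq_or_lt_of_le (h0 y) with h | h
    · simp [← h]
    · have hlog : Real.log (p y) ≤ Real.log (1/2) := Real.log_le_log h (hh y)
      have : Real.log (1/2) = -Real.log 2 := by
        rw [one_div, Real.log_inv]
      rw [this] at hlog
      nlinarith [h.le]
  calc Real.log 2 = ∑ y, p y * Real.log 2 := by rw [← Finset.sum_mul, hs, one_mul]
    _ ≤ ∑ y, -(p y * Real.log (p y)) := Finset.sum_le_sum fun y _ => key y
    _ = shannon p := by rw [shannon, ← Finset.sum_neg_distrib]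

def stdB : Fin 2 → Fin 2 → ℂ := fun a i => if a = i then 1 else 0

lemma stdB_onb : ONB stdB := by
  intro a b
  fin_cases a <;> fin_cases b <;> simp [stdB, Fin.sum_univ_two]

lemma shannon_std : shannon (bornProb3 ghz stdB stdB stdB) = Real.log 2 := by
  have hp : ∀ y : Fin 2 × Fin 2 × Fin 2, bornProb3 ghz stdB stdB stdB y =
      if y.1 = y.2.1 ∧ y.2.1 = y.2.2 then 1/2 else 0 := by
    intro ⟨a, b, c⟩
    rw [born_ghz]
    fin_cases a <;> fin_cases b <;> fin_cases c <;>
      simp [stdB, Complex.normSq] <;> norm_num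
  rw [shannon]
  rw [Finset.sum_congr rfl fun y _ => by rw [hp y]]
  rw [Fintype.sum_prod_type]
  simp only [Fintype.sum_prod_type, Fin.sum_univ_two]
  norm_num
  rw [show (1:ℝ)/2 = 2⁻¹ by norm_num, Real.log_inv]
  ring

/-- For the GHZ state, the minimum over all choices of local orthonormal measurement bases of
the Shannon entropy of the joint outcome distribution equals `ln 2`. -/
theorem ghz_min_outcome_entropy :
    sInf {h : ℝ | ∃ B₁ B₂ B₃ : Fin 2 → Fin 2 → ℂ, ONB B₁ ∧ ONB B₂ ∧ ONB B₃ ∧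
      h = shannon (bornProb3 ghz B₁ B₂ B₃)} = Real.log 2 := by
  have hmem : Real.log 2 ∈ {h : ℝ | ∃ B₁ B₂ B₃ : Fin 2 → Fin 2 → ℂ, ONB B₁ ∧ ONB B₂ ∧ ONB B₃ ∧
      h = shannon (bornProb3 ghz B₁ B₂ B₃)} :=
    ⟨stdB, stdB, stdB, stdB_onb, stdB_onb, stdB_onb, shannon_std.symm⟩
  have hlb : ∀ x ∈ {h : ℝ | ∃ B₁ B₂ B₃ : Fin 2 → Fin 2 → ℂ, ONB B₁ ∧ ONB B₂ ∧ ONB B₃ ∧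
      h = shannon (bornProb3 ghz B₁ B₂ B₃)}, Real.log 2 ≤ x := by
    rintro x ⟨B₁, B₂, B₃, h₁, h₂, h₃, rfl⟩
    exact entropy_ge _ (fun y => Complex.normSq_nonneg _) (born_le_half h₁ h₂ h₃)
      (sum_born h₁ h₂ h₃)
  exact le_antisymm (csInf_le ⟨Real.log 2, hlb⟩ hmem) (le_csInf ⟨_, hmem⟩ hlb)
end
end

section
/- The multipartite work deficit of the three-qubit W state (ln 3) is strictly greater than that of the GHZ state (ln 2). -/
noncomputable section
open scoped BigOperators
open Matrix

/-- Multipartite work deficit of a three-qubit *pure* state with amplitudes `ψ`: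
since `S(ρ) = 0`, it is the minimum over local orthonormal measurement bases of the Shannon
entropy of the joint outcome distribution. -/
def deficit3 (ψ : Fin 2 → Fin 2 → Fin 2 → ℂ) : ℝ :=
  sInf {h : ℝ | ∃ B₁ B₂ B₃ : Fin 2 → Fin 2 → ℂ, ONB B₁ ∧ ONB B₂ ∧ ONB B₃ ∧
    h = shannon (bornProb3 ψ B₁ B₂ B₃)}

/-- Amplitudes of the three-qubit W state `(|001⟩ + |010⟩ + |100⟩)/√3`. -/
def wState (i j k : Fin 2) : ℂ :=
  if (i = 0 ∧ j = 0 ∧ k = 1) ∨ (i = 0 ∧ j = 1 ∧ k = 0) ∨ (i = 1 ∧ j = 0 ∧ k = 0) then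
    (Complex.ofReal (Real.sqrt 3))⁻¹ else 0

/-! ### Auxiliary machinery -/

/-- The Kronecker-product measurement matrix. -/
def Kmat (B₁ B₂ B₃ : Fin 2 → Fin 2 → ℂ) :
    Matrix (Fin 2 × Fin 2 × Fin 2) (Fin 2 × Fin 2 × Fin 2) ℂ :=
  fun y x => (starRingEnd ℂ) (B₁ y.1 x.1) * (starRingEnd ℂ) (B₂ y.2.1 x.2.1) *
    (starRingEnd ℂ) (B₃ y.2.2 x.2.2)

lemma tri3 (f g h : Fin 2 → ℂ) :
    (∑ x : Fin 2 × Fin 2 × Fin 2, f x.1 * g x.2.1 * h x.2.2)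
      = (∑ i, f i) * (∑ j, g j) * (∑ k, h k) := by
  simp [Fintype.sum_prod_type, Fin.sum_univ_two]; ring

lemma Kmat_unitary (B₁ B₂ B₃ : Fin 2 → Fin 2 → ℂ) (h₁ : ONB B₁) (h₂ : ONB B₂) (h₃ : ONB B₃) :
    Kmat B₁ B₂ B₃ * (Kmat B₁ B₂ B₃)ᴴ = 1 := by
  ext y y'
  rw [Matrix.mul_apply]
  have hterm : ∀ x : Fin 2 × Fin 2 × Fin 2,
      Kmat B₁ B₂ B₃ y x * (Kmat B₁ B₂ B₃)ᴴ x y'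
      = ((starRingEnd ℂ) (B₁ y.1 x.1) * B₁ y'.1 x.1)
        * ((starRingEnd ℂ) (B₂ y.2.1 x.2.1) * B₂ y'.2.1 x.2.1)
        * ((starRingEnd ℂ) (B₃ y.2.2 x.2.2) * B₃ y'.2.2 x.2.2) := by
    intro x
    simp [Kmat, Matrix.conjTranspose_apply]
    ring
  rw [Finset.sum_congr rfl (fun x _ => hterm x)]
  have tfac := tri3 (fun i => (starRingEnd ℂ) (B₁ y.1 i) * B₁ y'.1 i)
    (fun j => (starRingEnd ℂ) (B₂ y.2.1 j) * B₂ y'.2.1 j)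
    (fun k => (starRingEnd ℂ) (B₃ y.2.2 k) * B₃ y'.2.2 k)
  beta_reduce at tfac
  rw [tfac, h₁, h₂, h₃]
  by_cases e1 : y.1 = y'.1 <;> by_cases e2 : y.2.1 = y'.2.1 <;> by_cases e3 : y.2.2 = y'.2.2 <;>
    simp [e1, e2, e3, Matrix.one_apply, Prod.ext_iff]

/-- Unitarity: the Born probabilities sum to the squared norm of the state. -/
lemma sum_bornProb3 (ψ : Fin 2 → Fin 2 → Fin 2 → ℂ) (B₁ B₂ B₃ : Fin 2 → Fin 2 → ℂ)
    (h₁ : ONB B₁) (h₂ : ONB B₂) (h₃ : ONB B₃) :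
    ∑ y, bornProb3 ψ B₁ B₂ B₃ y
      = ∑ x : Fin 2 × Fin 2 × Fin 2, Complex.normSq (ψ x.1 x.2.1 x.2.2) := by
  classical
  set K := Kmat B₁ B₂ B₃ with hKdef
  have hK : K * Kᴴ = 1 := Kmat_unitary B₁ B₂ B₃ h₁ h₂ h₃
  have hKK : Kᴴ * K = 1 := mul_eq_one_comm.mp hK
  set v : Fin 2 × Fin 2 × Fin 2 → ℂ := fun x => ψ x.1 x.2.1 x.2.2 with hv
  set S : Fin 2 × Fin 2 × Fin 2 → ℂ := K.mulVec v with hS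
  have hborn : ∀ y, bornProb3 ψ B₁ B₂ B₃ y = Complex.normSq (S y) := by
    intro y
    unfold bornProb3
    congr 1
    rw [hS]
    simp only [Matrix.mulVec, dotProduct, Fintype.sum_prod_type]
    rfl
  have key : ∑ y, (starRingEnd ℂ) (S y) * S y = ∑ x, (starRingEnd ℂ) (v x) * v x := by
    have hdp : ∑ y, (starRingEnd ℂ) (S y) * S y = dotProduct (star S) S := rfl
    rw [hdp, hS, Matrix.star_mulVec, Matrix.dotProduct_mulVec, Matrix.vecMul_vecMul, hKK,
      Matrix.vecMul_one]
    rfl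
  simp only [hborn]
  have cast1 : ((∑ y, Complex.normSq (S y) : ℝ) : ℂ)
      = ((∑ x : Fin 2 × Fin 2 × Fin 2, Complex.normSq (ψ x.1 x.2.1 x.2.2) : ℝ) : ℂ) := by
    push_cast
    calc (∑ y, (Complex.normSq (S y) : ℂ))
        = ∑ y, (starRingEnd ℂ) (S y) * S y := by
          refine Finset.sum_congr rfl fun y _ => ?_
          rw [Complex.normSq_eq_conj_mul_self]
      _ = ∑ x, (starRingEnd ℂ) (v x) * v x := key
      _ = ∑ x : Fin 2 × Fin 2 × Fin 2, (Complex.normSq (ψ x.1 x.2.1 x.2.2) : ℂ) := by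
          refine Finset.sum_congr rfl fun x _ => ?_
          rw [Complex.normSq_eq_conj_mul_self]
  exact_mod_cast cast1

lemma onb_row (B : Fin 2 → Fin 2 → ℂ) (h : ONB B) (a : Fin 2) :
    ‖B a 0‖ ^ 2 + ‖B a 1‖ ^ 2 = 1 := by
  have hd := h a a
  simp only [if_pos rfl, Fin.sum_univ_two] at hd
  have h0 : (starRingEnd ℂ) (B a 0) * B a 0 = (Complex.normSq (B a 0) : ℂ) :=
    (Complex.normSq_eq_conj_mul_self).symm
  have h1 : (starRingEnd ℂ) (B a 1) * B a 1 = (Complex.normSq (B a 1) : ℂ) :=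
    (Complex.normSq_eq_conj_mul_self).symm
  rw [h0, h1] at hd
  have hre : Complex.normSq (B a 0) + Complex.normSq (B a 1) = 1 := by
    simp only [if_true] at hd
    exact_mod_cast hd
  rw [← Complex.sq_norm, ← Complex.sq_norm] at hre
  exact hre

lemma lemA (α α' β β' γ γ' : ℝ)
    (h1 : α^2 + α'^2 = 1) (h2 : β^2 + β'^2 = 1) (h3 : γ^2 + γ'^2 = 1) :
    (α*β*γ' + α*β'*γ + α'*β*γ)^2 ≤ 4/3 := by
  have cs : (α*β*γ' + α*β'*γ + α'*β*γ)^2 ≤ (β*γ' + β'*γ)^2 + (β*γ)^2 := by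
    nlinarith [sq_nonneg (α*(β*γ) - α'*(β*γ' + β'*γ)), sq_nonneg (β*γ'+β'*γ), sq_nonneg (β*γ)]
  have am : 2*(β*β')*(γ*γ') ≤ (β*β')^2 + (γ*γ')^2 := by nlinarith [sq_nonneg (β*β' - γ*γ')]
  nlinarith [sq_nonneg (β^2 + γ^2 - 4/3), sq_nonneg (β^2 - γ^2)]

/-- Every outcome probability of the W state in a product basis is at most `4/9`. -/
lemma born_w_le (B₁ B₂ B₃ : Fin 2 → Fin 2 → ℂ) (h₁ : ONB B₁) (h₂ : ONB B₂) (h₃ : ONB B₃)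
    (y : Fin 2 × Fin 2 × Fin 2) : bornProb3 wState B₁ B₂ B₃ y ≤ 4/9 := by
  set a0 := (starRingEnd ℂ) (B₁ y.1 0)
  set a1 := (starRingEnd ℂ) (B₁ y.1 1)
  set b0 := (starRingEnd ℂ) (B₂ y.2.1 0)
  set b1 := (starRingEnd ℂ) (B₂ y.2.1 1)
  set c0 := (starRingEnd ℂ) (B₃ y.2.2 0)
  set c1 := (starRingEnd ℂ) (B₃ y.2.2 1)
  have hsum : (∑ i, ∑ j, ∑ k,
      (starRingEnd ℂ) (B₁ y.1 i) * (starRingEnd ℂ) (B₂ y.2.1 j) *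
        (starRingEnd ℂ) (B₃ y.2.2 k) * wState i j k)
      = (a0*b0*c1 + a0*b1*c0 + a1*b0*c0) * (Complex.ofReal (Real.sqrt 3))⁻¹ := by
    simp [wState, Fin.sum_univ_two]
    ring
  unfold bornProb3
  rw [hsum, Complex.normSq_mul]
  have habs : Complex.normSq ((Complex.ofReal (Real.sqrt 3))⁻¹) = 1/3 := by
    rw [Complex.normSq_inv, Complex.normSq_ofReal,
      Real.mul_self_sqrt (by norm_num : (0:ℝ) ≤ 3)]
    norm_num
  rw [habs]
  have tri : ‖a0*b0*c1 + a0*b1*c0 + a1*b0*c0‖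
      ≤ ‖a0‖ * ‖b0‖ * ‖c1‖
        + ‖a0‖ * ‖b1‖ * ‖c0‖
        + ‖a1‖ * ‖b0‖ * ‖c0‖ := by
    calc ‖a0*b0*c1 + a0*b1*c0 + a1*b0*c0‖
        ≤ ‖a0*b0*c1 + a0*b1*c0‖ + ‖a1*b0*c0‖ := norm_add_le _ _
      _ ≤ ‖a0*b0*c1‖ + ‖a0*b1*c0‖ + ‖a1*b0*c0‖ := by
          have := norm_add_le (a0*b0*c1) (a0*b1*c0); linarith
      _ = _ := by simp [norm_mul]
  have hA : ‖a0‖ ^ 2 + ‖a1‖ ^ 2 = 1 := by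
    have := onb_row B₁ h₁ y.1
    simpa [a0, a1] using this
  have hB : ‖b0‖ ^ 2 + ‖b1‖ ^ 2 = 1 := by
    have := onb_row B₂ h₂ y.2.1
    simpa [b0, b1] using this
  have hC : ‖c0‖ ^ 2 + ‖c1‖ ^ 2 = 1 := by
    have := onb_row B₃ h₃ y.2.2
    simpa [c0, c1] using this
  have key := lemA (‖a0‖) (‖a1‖) (‖b0‖) (‖b1‖)
    (‖c0‖) (‖c1‖) hA hB hC
  have hnsq : Complex.normSq (a0*b0*c1 + a0*b1*c0 + a1*b0*c0)
      = ‖a0*b0*c1 + a0*b1*c0 + a1*b0*c0‖ ^ 2 := (Complex.sq_norm _).symm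
  rw [hnsq]
  nlinarith [norm_nonneg (a0*b0*c1 + a0*b1*c0 + a1*b0*c0)]

lemma shannon_ge {α : Type*} [Fintype α] (p : α → ℝ) (c : ℝ) (hc : 0 < c)
    (h0 : ∀ y, 0 ≤ p y) (hle : ∀ y, p y ≤ c) (hsum : ∑ y, p y = 1) :
    Real.log c⁻¹ ≤ shannon p := by
  have key : ∀ y, p y * Real.log c⁻¹ ≤ -(p y * Real.log (p y)) := by
    intro y
    rcases eq_or_lt_of_le (h0 y) with h | h
    · simp [← h]
    · have hlog : Real.log c⁻¹ ≤ Real.log (p y)⁻¹ := by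
        apply Real.log_le_log (by positivity)
        exact inv_anti₀ h (hle y)
      calc p y * Real.log c⁻¹ ≤ p y * Real.log (p y)⁻¹ :=
            mul_le_mul_of_nonneg_left hlog (h0 y)
        _ = -(p y * Real.log (p y)) := by rw [Real.log_inv]; ring
  calc Real.log c⁻¹ = ∑ y, p y * Real.log c⁻¹ := by rw [← Finset.sum_mul, hsum, one_mul]
    _ ≤ ∑ y, -(p y * Real.log (p y)) := Finset.sum_le_sum fun y _ => key y
    _ = shannon p := by rw [shannon, ← Finset.sum_neg_distrib]

lemma shannon_nonneg {α : Type*} [Fintype α] (p : α → ℝ)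
    (h0 : ∀ y, 0 ≤ p y) (hsum : ∑ y, p y = 1) : 0 ≤ shannon p := by
  have hle : ∀ y, p y ≤ 1 := by
    intro y
    rw [← hsum]
    exact Finset.single_le_sum (fun i _ => h0 i) (Finset.mem_univ y)
  rw [shannon, ← Finset.sum_neg_distrib]
  apply Finset.sum_nonneg
  intro y _
  have : p y * Real.log (p y) ≤ 0 :=
    mul_nonpos_of_nonneg_of_nonpos (h0 y) (Real.log_nonpos (h0 y) (hle y))
  linarith

/-- The computational basis. -/
def idB : Fin 2 → Fin 2 → ℂ := fun a i => if a = i then 1 else 0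

lemma idB_onb : ONB idB := by
  intro a b
  fin_cases a <;> fin_cases b <;> simp [idB, Fin.sum_univ_two]

lemma born_ghz_idB (y : Fin 2 × Fin 2 × Fin 2) :
    bornProb3 ghz idB idB idB y = Complex.normSq (ghz y.1 y.2.1 y.2.2) := by
  unfold bornProb3
  congr 1
  obtain ⟨y1, y2, y3⟩ := y
  fin_cases y1 <;> fin_cases y2 <;> fin_cases y3 <;>
    simp [idB, Fin.sum_univ_two]

lemma normSq_inv_sqrt2 : Complex.normSq ((Complex.ofReal (Real.sqrt 2))⁻¹) = 1/2 := by
  rw [Complex.normSq_inv, Complex.normSq_ofReal, Real.mul_self_sqrt (by norm_num : (0:ℝ) ≤ 2)]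
  norm_num

lemma shannon_ghz_idB : shannon (bornProb3 ghz idB idB idB) = Real.log 2 := by
  rw [shannon]
  rw [Fintype.sum_prod_type]
  simp only [Fintype.sum_prod_type, Fin.sum_univ_two, born_ghz_idB]
  simp only [ghz]
  norm_num [normSq_inv_sqrt2]
  have hl : Real.log (1/2) = -Real.log 2 := by
    rw [one_div, Real.log_inv]
  rw [hl]; ring

lemma wState_norm : ∑ x : Fin 2 × Fin 2 × Fin 2, Complex.normSq (wState x.1 x.2.1 x.2.2) = 1 := by
  have h3 : Complex.normSq ((Complex.ofReal (Real.sqrt 3))⁻¹) = 1/3 := by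
    rw [Complex.normSq_inv, Complex.normSq_ofReal,
      Real.mul_self_sqrt (by norm_num : (0:ℝ) ≤ 3)]
    norm_num
  simp [Fintype.sum_prod_type, Fin.sum_univ_two, wState, h3]
  norm_num

lemma ghz_norm : ∑ x : Fin 2 × Fin 2 × Fin 2, Complex.normSq (ghz x.1 x.2.1 x.2.2) = 1 := by
  simp [Fintype.sum_prod_type, Fin.sum_univ_two, ghz, normSq_inv_sqrt2]
  norm_num

/-- The multipartite work deficit of the W state is strictly greater than that of the
GHZ state. -/
theorem wState_deficit_gt_ghz_deficit : deficit3 wState > deficit3 ghz := by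
  have hG : deficit3 ghz ≤ Real.log 2 := by
    have hmem : Real.log 2 ∈ {h : ℝ | ∃ B₁ B₂ B₃ : Fin 2 → Fin 2 → ℂ,
        ONB B₁ ∧ ONB B₂ ∧ ONB B₃ ∧ h = shannon (bornProb3 ghz B₁ B₂ B₃)} :=
      ⟨idB, idB, idB, idB_onb, idB_onb, idB_onb, shannon_ghz_idB.symm⟩
    have hbdd : BddBelow {h : ℝ | ∃ B₁ B₂ B₃ : Fin 2 → Fin 2 → ℂ,
        ONB B₁ ∧ ONB B₂ ∧ ONB B₃ ∧ h = shannon (bornProb3 ghz B₁ B₂ B₃)} := by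
      refine ⟨0, ?_⟩
      rintro h ⟨B₁, B₂, B₃, h₁, h₂, h₃, rfl⟩
      exact shannon_nonneg _ (fun y => Complex.normSq_nonneg _)
        (by rw [sum_bornProb3 ghz B₁ B₂ B₃ h₁ h₂ h₃, ghz_norm])
    exact csInf_le hbdd hmem
  have hW : Real.log ((4/9 : ℝ))⁻¹ ≤ deficit3 wState := by
    apply le_csInf
    · exact ⟨_, idB, idB, idB, idB_onb, idB_onb, idB_onb, rfl⟩
    · rintro h ⟨B₁, B₂, B₃, h₁, h₂, h₃, rfl⟩
      exact shannon_ge _ (4/9) (by norm_num) (fun y => Complex.normSq_nonneg _)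
        (born_w_le B₁ B₂ B₃ h₁ h₂ h₃)
        (by rw [sum_bornProb3 wState B₁ B₂ B₃ h₁ h₂ h₃, wState_norm])
  have hlt : Real.log 2 < Real.log ((4/9 : ℝ))⁻¹ := by
    apply Real.log_lt_log (by norm_num)
    norm_num
  exact lt_of_le_of_lt hG (lt_of_lt_of_le hlt hW)
end
end
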